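/- If (X̄, ȳ, S̄) is an ε-precise solution of the infeasible-interior refining problem, meaning X̄ + ηX ⪰ 0, S̄ + ηS ⪰ 0, ‖ηC̄ - Σᵢ ȳᵢAᵢ - S̄‖ ≤ ε where C̄ = C - Σᵢ yᵢAᵢ - S, |η b̄ᵢ - Aᵢ • X̄| ≤ ε where b̄ᵢ = bᵢ - Aᵢ • X, and (X̄ + ηX) • (S̄ + ηS) ≤ ε, then with η > 1 the point (X + (1/η)X̄, y + (1/η)ȳ, S + (1/η)S̄) satisfies: X + (1/η)X̄ ⪰ 0, S + (1/η)S̄ ⪰ 0, ‖C - Σᵢ(yᵢ + (1/η)ȳᵢ)Aᵢ - (S + (1/η)S̄)‖ ≤ ε/η, |bᵢ - Aᵢ • (X + (1/η)X̄)| ≤ ε/η, and (X + (1/η)X̄) • (S + (1/η)S̄) ≤ ε/η². -/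

import Mathlib

open Matrix Finset

/-- The Frobenius norm of a real square matrix. -/
noncomputable def frobeniusNorm' {n : ℕ} (M : Matrix (Fin n) (Fin n) ℝ) : ℝ :=
  Real.sqrt (∑ i, ∑ j, (M i j) ^ 2)

lemma posSemidef_smul {n : ℕ} {M : Matrix (Fin n) (Fin n) ℝ} (hM : M.PosSemidef)
    {c : ℝ} (hc : 0 ≤ c) : (c • M).PosSemidef := by
  refine ⟨?_, fun x => ?_⟩
  · unfold Matrix.IsHermitian
    rw [Matrix.conjTranspose_smul, hM.1]
    simp
  · have hx : (x.sum fun i xi => x.sum fun j xj => star xi * (c • M) i j * xj)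
        = c * (x.sum fun i xi => x.sum fun j xj => star xi * M i j * xj) := by
      rw [Finsupp.mul_sum]
      refine Finsupp.sum_congr fun i _ => ?_
      rw [Finsupp.mul_sum]
      refine Finsupp.sum_congr fun j _ => ?_
      simp only [Matrix.smul_apply, smul_eq_mul]
      ring
    rw [hx]
    exact mul_nonneg hc (hM.2 x)

lemma frobeniusNorm'_smul {n : ℕ} (c : ℝ) (M : Matrix (Fin n) (Fin n) ℝ) :
    frobeniusNorm' (c • M) = |c| * frobeniusNorm' M := by
  unfold frobeniusNorm'
  rw [← Real.sqrt_sq_eq_abs, ← Real.sqrt_mul (sq_nonneg c)]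
  congr 1
  simp [Matrix.smul_apply, mul_pow, Finset.mul_sum]

/-- If `(X̄, ȳ, S̄)` is an ε-precise solution of the
infeasible-interior refining problem, then with `η > 1` the point
`(X + (1/η)X̄, y + (1/η)ȳ, S + (1/η)S̄)` is an `(ε/η)`-precise solution of the
original SDO, with complementarity product at most `ε/η²`. -/
theorem infeasible_interior_IR_step {n m : ℕ}
    (A : Fin m → Matrix (Fin n) (Fin n) ℝ) (C : Matrix (Fin n) (Fin n) ℝ)
    (b : Fin m → ℝ) (ε η : ℝ) (hη : 1 < η)
    (X S Xbar Sbar : Matrix (Fin n) (Fin n) ℝ) (y ybar : Fin m → ℝ)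
    (bbar : Fin m → ℝ) (Cbar : Matrix (Fin n) (Fin n) ℝ)
    (hCbar : Cbar = C - (∑ i, y i • A i) - S)
    (hbbar : ∀ i, bbar i = b i - (A i * X).trace)
    -- ε-precise solution of the refining problem
    (hXpsd : (Xbar + η • X).PosSemidef)
    (hSpsd : (Sbar + η • S).PosSemidef)
    (hdres : frobeniusNorm' (η • Cbar - (∑ i, ybar i • A i) - Sbar) ≤ ε)
    (hpres : ∀ i, |η * bbar i - (A i * Xbar).trace| ≤ ε)
    (hgap : ((Xbar + η • X) * (Sbar + η • S)).trace ≤ ε) :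
    -- the updated point is an (ε/η)-precise solution of the original SDO
    (X + η⁻¹ • Xbar).PosSemidef ∧
    (S + η⁻¹ • Sbar).PosSemidef ∧
    frobeniusNorm' (C - (∑ i, (y i + η⁻¹ * ybar i) • A i) - (S + η⁻¹ • Sbar)) ≤ ε / η ∧
    (∀ i, |b i - (A i * (X + η⁻¹ • Xbar)).trace| ≤ ε / η) ∧
    ((X + η⁻¹ • Xbar) * (S + η⁻¹ • Sbar)).trace ≤ ε / η ^ 2 := by
  have hη0 : (0:ℝ) < η := lt_trans one_pos hη
  have hne : η ≠ 0 := hη0.ne'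
  have hinv : (0:ℝ) ≤ η⁻¹ := le_of_lt (inv_pos.mpr hη0)
  have hXeq : X + η⁻¹ • Xbar = η⁻¹ • (Xbar + η • X) := by
    rw [smul_add, smul_smul, inv_mul_cancel₀ hne, one_smul, add_comm]
  have hSeq : S + η⁻¹ • Sbar = η⁻¹ • (Sbar + η • S) := by
    rw [smul_add, smul_smul, inv_mul_cancel₀ hne, one_smul, add_comm]
  refine ⟨?_, ?_, ?_, ?_, ?_⟩
  · rw [hXeq]; exact posSemidef_smul hXpsd hinv
  · rw [hSeq]; exact posSemidef_smul hSpsd hinv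
  · have key : C - (∑ i, (y i + η⁻¹ * ybar i) • A i) - (S + η⁻¹ • Sbar)
        = η⁻¹ • (η • Cbar - (∑ i, ybar i • A i) - Sbar) := by
      rw [smul_sub, smul_sub, smul_smul, inv_mul_cancel₀ hne, one_smul, hCbar]
      simp only [add_smul, Finset.sum_add_distrib, Finset.smul_sum, mul_smul]
      abel
    rw [key, frobeniusNorm'_smul, abs_of_nonneg hinv, div_eq_inv_mul]
    exact mul_le_mul_of_nonneg_left hdres hinv
  · intro i
    have : b i - (A i * (X + η⁻¹ • Xbar)).trace
        = η⁻¹ * (η * bbar i - (A i * Xbar).trace) := by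
      rw [hbbar]
      rw [mul_add, Matrix.mul_smul, Matrix.trace_add, Matrix.trace_smul]
      field_simp
      rw [smul_eq_mul, one_div, mul_sub, mul_add, mul_inv_cancel_left₀ hne]
      ring
    rw [this, abs_mul, abs_of_nonneg hinv, div_eq_inv_mul]
    exact mul_le_mul_of_nonneg_left (hpres i) hinv
  · rw [hXeq, hSeq, Matrix.smul_mul, Matrix.mul_smul, Matrix.trace_smul, Matrix.trace_smul,
      smul_eq_mul, smul_eq_mul, ← mul_assoc, ← mul_inv, ← sq]
    rw [div_eq_inv_mul, ← inv_pow]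
    exact mul_le_mul_of_nonneg_left hgap (by positivity)
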